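/- In the joint-density setup for (U, W, A): assume W ⟂ A | U holds in density form, pU(u) > 0 for μ-almost every u, pUA(u,a) > 0 for (μ⊗α)-almost every (u,a), and pWA(w,a) > 0 for (ν⊗α)-almost every (w,a). Then for α-almost every a the following holds: for every bounded measurable ℓ : W → ℝ such that ∫ ℓ(w) h(u,w,a) dν(w) = 0 for μ-almost every u (i.e. E[ℓ(W) | U, A = a] = 0), one has ∫ ℓ(w) · r_a(w) · pWA(w,a) dν(w) = 0, where r_a(w) = pW(w)·pA(a)/pWA(w,a). That is, the density ratio r_a is orthogonal in L²(p_{W|A=a}) to every such ℓ. -/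

import Mathlib

open MeasureTheory

/-- The ATE density ratio `r_a(w) = pW(w)·pA(a)/pWA(w,a)` is orthogonal in
`L²(p_{W|A=a})` to every bounded measurable `ℓ` with `E[ℓ(W) | U, A = a] = 0`, for α-a.e. `a`,
in the joint-density setup for `(U, W, A)` with `W ⟂ A | U` and positivity of the involved
densities. -/
theorem ate_density_ratio_orthogonal
    {U W A : Type*} [MeasurableSpace U] [MeasurableSpace W] [MeasurableSpace A]
    (μ : Measure U) (ν : Measure W) (α : Measure A)
    [SigmaFinite μ] [SigmaFinite ν] [SigmaFinite α]
    (h : U × W × A → ℝ) (h_meas : Measurable h) (h_nonneg : ∀ x, 0 ≤ h x)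
    (h_int : Integrable h (μ.prod (ν.prod α)))
    (pU : U → ℝ) (hpU : ∀ u, pU u = ∫ a, ∫ w, h (u, w, a) ∂ν ∂α)
    (pW : W → ℝ) (hpW : ∀ w, pW w = ∫ a, ∫ u, h (u, w, a) ∂μ ∂α)
    (pA : A → ℝ) (hpA : ∀ a, pA a = ∫ w, ∫ u, h (u, w, a) ∂μ ∂ν)
    (pUW : U × W → ℝ) (hpUW : ∀ u w, pUW (u, w) = ∫ a, h (u, w, a) ∂α)
    (pUA : U × A → ℝ) (hpUA : ∀ u a, pUA (u, a) = ∫ w, h (u, w, a) ∂ν)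
    (pWA : W × A → ℝ) (hpWA : ∀ w a, pWA (w, a) = ∫ u, h (u, w, a) ∂μ)
    (ci : ∀ᵐ x ∂μ.prod (ν.prod α), h x * pU x.1 = pUW (x.1, x.2.1) * pUA (x.1, x.2.2))
    (hpU_pos : ∀ᵐ u ∂μ, 0 < pU u)
    (hpUA_pos : ∀ᵐ x ∂μ.prod α, 0 < pUA x)
    (hpWA_pos : ∀ᵐ x ∂ν.prod α, 0 < pWA x) :
    ∀ᵐ a ∂α, ∀ ℓ : W → ℝ, Measurable ℓ → (∃ C, ∀ w, |ℓ w| ≤ C) →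
      (∀ᵐ u ∂μ, ∫ w, ℓ w * h (u, w, a) ∂ν = 0) →
      ∫ w, ℓ w * (pW w * pA a / pWA (w, a)) * pWA (w, a) ∂ν = 0 := by
  -- a measure-preserving rearrangement A × (U × W) → U × (W × A)
  have hmp : MeasurePreserving
      (fun z : A × U × W => (z.2.1, z.2.2, z.1)) (α.prod (μ.prod ν)) (μ.prod (ν.prod α)) :=
    (measurePreserving_prodAssoc μ ν α).comp
      (Measure.measurePreserving_swap : MeasurePreserving _ (α.prod (μ.prod ν)) ((μ.prod ν).prod α))
  -- transport the conditional-independence hypothesis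
  have ci' : ∀ᵐ z ∂α.prod (μ.prod ν),
      h (z.2.1, z.2.2, z.1) * pU z.2.1 = pUW (z.2.1, z.2.2) * pUA (z.2.1, z.1) := by
    have := ae_of_ae_map hmp.measurable.aemeasurable (hmp.map_eq ▸ ci)
    filter_upwards [this] with z hz using hz
  have ciA : ∀ᵐ a ∂α, ∀ᵐ u ∂μ, ∀ᵐ w ∂ν,
      h (u, w, a) * pU u = pUW (u, w) * pUA (u, a) := by
    filter_upwards [Measure.ae_ae_of_ae_prod ci'] with a ha
    exact Measure.ae_ae_of_ae_prod ha
  -- slice the positivity hypotheses in `a`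
  have hUA' : ∀ᵐ a ∂α, ∀ᵐ u ∂μ, 0 < pUA (u, a) := by
    have hs : MeasurePreserving (Prod.swap : A × U → U × A) (α.prod μ) (μ.prod α) :=
      Measure.measurePreserving_swap
    exact Measure.ae_ae_of_ae_prod
      (ae_of_ae_map hs.measurable.aemeasurable (hs.map_eq ▸ hpUA_pos))
  have hWA' : ∀ᵐ a ∂α, ∀ᵐ w ∂ν, 0 < pWA (w, a) := by
    have hs : MeasurePreserving (Prod.swap : A × W → W × A) (α.prod ν) (ν.prod α) :=
      Measure.measurePreserving_swap
    exact Measure.ae_ae_of_ae_prod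
      (ae_of_ae_map hs.measurable.aemeasurable (hs.map_eq ▸ hpWA_pos))
  -- lift positivity of `pU` to the triple product
  have hpU_pos3 : ∀ᵐ x ∂μ.prod (ν.prod α), 0 < pU x.1 := by
    rw [ae_iff] at hpU_pos ⊢
    refine measure_mono_null (fun x hx => ?_)
      (show (μ.prod (ν.prod α)) ({u | ¬ 0 < pU u} ×ˢ Set.univ) = 0 by
        rw [Measure.prod_prod, hpU_pos, zero_mul])
    exact ⟨hx, trivial⟩
  filter_upwards [ciA, hUA', hWA'] with a hci hUA hWA
  rintro ℓ hℓmeas ⟨C, hC⟩ hzero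
  set F : U × W × A → ℝ := fun x => ℓ x.2.1 * h x with hF
  have hFint : Integrable F (μ.prod (ν.prod α)) := by
    refine h_int.bdd_mul (c := C) ?_ (Filter.Eventually.of_forall fun x => ?_)
    · exact (hℓmeas.comp (measurable_fst.comp measurable_snd)).aestronglyMeasurable
    · rw [Real.norm_eq_abs]; exact hC _
  -- key orthogonality against pUW
  have K : ∀ᵐ u ∂μ, ∫ w, ℓ w * pUW (u, w) ∂ν = 0 := by
    filter_upwards [hci, hUA, hpU_pos, hzero] with u hciu hua hpu hzu
    have heq : (fun w => ℓ w * pUW (u, w)) =ᵐ[ν]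
        fun w => (ℓ w * h (u, w, a)) * (pU u / pUA (u, a)) := by
      filter_upwards [hciu] with w hw
      have h2 : pUW (u, w) = h (u, w, a) * pU u / pUA (u, a) := by
        rw [eq_div_iff hua.ne']; linarith
      rw [h2]; ring
    rw [integral_congr_ae heq, integral_mul_const, hzu, zero_mul]
  -- rewrite F using conditional independence
  have hFG : F =ᵐ[μ.prod (ν.prod α)]
      fun x => (ℓ x.2.1 * pUW (x.1, x.2.1)) * (pUA (x.1, x.2.2) / pU x.1) := by
    filter_upwards [ci, hpU_pos3] with x hx hpu
    have h2 : h x = pUW (x.1, x.2.1) * pUA (x.1, x.2.2) / pU x.1 := by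
      rw [eq_div_iff hpu.ne']; linarith
    show ℓ x.2.1 * h x = _
    rw [h2]; ring
  have hGint : Integrable
      (fun x : U × W × A => (ℓ x.2.1 * pUW (x.1, x.2.1)) * (pUA (x.1, x.2.2) / pU x.1))
      (μ.prod (ν.prod α)) := hFint.congr hFG
  -- the triple integral of F is zero
  have T0 : ∫ x, F x ∂μ.prod (ν.prod α) = 0 := by
    rw [integral_congr_ae hFG, integral_prod _ hGint]
    have hz : ∀ᵐ u ∂μ,
        (∫ y : W × A, (ℓ y.1 * pUW (u, y.1)) * (pUA (u, y.2) / pU u) ∂ν.prod α) = 0 := by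
      filter_upwards [K] with u hK
      rw [integral_prod_mul (fun w => ℓ w * pUW (u, w)) (fun a' => pUA (u, a') / pU u),
        hK, zero_mul]
    calc (∫ u, ∫ y : W × A, (ℓ y.1 * pUW (u, y.1)) * (pUA (u, y.2) / pU u) ∂ν.prod α ∂μ)
        = ∫ _u, (0 : ℝ) ∂μ := integral_congr_ae hz
      _ = 0 := integral_zero _ _
  -- the triple integral of F equals ∫ ℓ(w) pW(w) dν
  have T1 : ∫ x, F x ∂μ.prod (ν.prod α) = ∫ w, ℓ w * pW w ∂ν := by
    rw [integral_prod_symm _ hFint]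
    have step1 : (fun y : W × A => ∫ u, F (u, y) ∂μ) = fun y : W × A => ℓ y.1 * pWA y := by
      funext y
      calc ∫ u, F (u, y) ∂μ = ∫ u, ℓ y.1 * h (u, y) ∂μ := rfl
        _ = ℓ y.1 * ∫ u, h (u, y) ∂μ := integral_const_mul _ _
        _ = ℓ y.1 * pWA y := by
            rw [show pWA y = ∫ u, h (u, y) ∂μ from hpWA y.1 y.2]
    have hWAint : Integrable (fun y : W × A => ℓ y.1 * pWA y) (ν.prod α) := by
      have := hFint.integral_prod_right
      rwa [step1] at this
    rw [step1, integral_prod _ hWAint]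
    refine integral_congr_ae (Filter.Eventually.of_forall fun w => ?_)
    show (∫ a', ℓ w * pWA (w, a') ∂α) = ℓ w * pW w
    rw [integral_const_mul]
    congr 1
    rw [hpW w]
    exact integral_congr_ae (Filter.Eventually.of_forall fun a' => hpWA w a')
  have hmain : ∫ w, ℓ w * pW w ∂ν = 0 := T1.symm.trans T0
  have final : (fun w => ℓ w * (pW w * pA a / pWA (w, a)) * pWA (w, a)) =ᵐ[ν]
      fun w => (ℓ w * pW w) * pA a := by
    filter_upwards [hWA] with w hw
    have hne : pWA (w, a) ≠ 0 := hw.ne'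
    field_simp
  rw [integral_congr_ae final, integral_mul_const, hmain, zero_mul]
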